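/- arXiv:2511.02585 — 2 statements merged into one kernel-verified Lean document; each statement's English description precedes it below -/
import Mathlib

section
/- For every t ∈ V_m the following two identities hold in R: ξ⁺_1(t)·∏_{1≤r≤m, r odd}(ξ⁺_1(t) − ξ⁺_1(r))·∏_{1≤r≤m, r even}(ξ⁺_1(t) − ξ⁺_1(−r)) = 0 and ξ⁻_1(t)·∏_{1≤r≤m, r odd}(ξ⁻_1(t) − ξ⁻_1(−r))·∏_{1≤r≤m, r even}(ξ⁻_1(t) − ξ⁻_1(r)) = 0; i.e., each of the two degree-two Knutson–Tao classes satisfies a monic polynomial relation of degree m+1 over R. -/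
noncomputable section

open Finset MvPolynomial

/-- The coefficient ring `R = ℚ[α,δ]`, realized as polynomials in two variables. -/
abbrev Rpoly : Type := MvPolynomial (Fin 2) ℚ

/-- The variable `α`. -/
def va : Rpoly := X 0

/-- The variable `δ`. -/
def vd : Rpoly := X 1

/-- `P⁻(a,b) = ∏_{k=a}^{b} (−α + k·δ)`. -/
def Pneg (a b : ℤ) : Rpoly :=
  ∏ k ∈ Finset.Icc a b, (-va + MvPolynomial.C (k : ℚ) * vd)

/-- `P⁺(a,b) = ∏_{k=a}^{b} (α + k·δ)`. -/
def Ppos (a b : ℤ) : Rpoly :=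
  ∏ k ∈ Finset.Icc a b, (va + MvPolynomial.C (k : ℚ) * vd)

/-- Binomial coefficient `C(n,q)` (all uses have `n ≥ 0`). -/
def B (n : ℤ) (q : ℕ) : ℚ := (n.toNat).choose q

/-- The Knutson–Tao class `ξ⁺_q = ξ(m+q, m−q)`, as a function on vertices `t`
(the vertex `t` encodes the pair `(m+t, m−t)`). -/
def xiP (m : ℤ) (q : ℕ) (t : ℤ) : Rpoly :=
  if (q : ℤ) ≤ t ∧ t ≤ m then
    MvPolynomial.C (B (⌈((t : ℚ) - (q : ℚ) + 1) / 2⌉ + q - 1) q) *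
      Pneg (⌈((t : ℚ) - (q : ℚ) + 1) / 2⌉ - 1) (⌈((t : ℚ) - (q : ℚ) + 1) / 2⌉ + q - 2)
  else if -m ≤ t ∧ t ≤ -((q : ℤ) + 1) then
    MvPolynomial.C (B (⌈(-(t : ℚ) - (q : ℚ)) / 2⌉ + q - 1) q) *
      Ppos (⌈(-(t : ℚ) - (q : ℚ)) / 2⌉ + 1) (⌈(-(t : ℚ) - (q : ℚ)) / 2⌉ + q)
  else 0

/-- The Knutson–Tao class `ξ⁻_q = ξ(m−q, m+q)`. -/
def xiM (m : ℤ) (q : ℕ) (t : ℤ) : Rpoly :=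
  if (q : ℤ) + 1 ≤ t ∧ t ≤ m then
    MvPolynomial.C (B (⌈((t : ℚ) - (q : ℚ)) / 2⌉ + q - 1) q) *
      Pneg (⌈((t : ℚ) - (q : ℚ)) / 2⌉) (⌈((t : ℚ) - (q : ℚ)) / 2⌉ + q - 1)
  else if -m ≤ t ∧ t ≤ -(q : ℤ) then
    MvPolynomial.C (B (⌈(-(t : ℚ) - (q : ℚ) + 1) / 2⌉ + q - 1) q) *
      Ppos (⌈(-(t : ℚ) - (q : ℚ) + 1) / 2⌉) (⌈(-(t : ℚ) - (q : ℚ) + 1) / 2⌉ + q - 1)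
  else 0

/-- The weight of the vertex `t`: `w(t) = ((1−2t)/2)·α + (t(t−1)/2)·δ`. -/
def w (t : ℤ) : Rpoly :=
  MvPolynomial.C ((1 - 2 * (t : ℚ)) / 2) * va +
    MvPolynomial.C (((t : ℚ) * ((t : ℚ) - 1)) / 2) * vd

/-! Auxiliary lemmas -/

lemma ceil_q (a : ℤ) (x : ℚ) (k : ℤ) (hx : x = (a:ℚ)/2) (h1 : 2*k-2 < a) (h2 : a ≤ 2*k) :
    ⌈x⌉ = k := by
  rw [Int.ceil_eq_iff]
  have c1 : ((2*k-2 : ℤ):ℚ) < (a:ℚ) := by exact_mod_cast h1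
  have c2 : ((a:ℤ):ℚ) ≤ ((2*k:ℤ):ℚ) := by exact_mod_cast h2
  push_cast at c1 c2 ⊢
  constructor <;> rw [hx] <;> linarith

lemma xiP_zero (m : ℕ) {t : ℤ} (h1 : t ≤ 0) (h2 : -1 ≤ t) : xiP m 1 t = 0 := by
  unfold xiP
  rw [if_neg (by push_cast; omega), if_neg (by push_cast; omega)]

lemma xiM_zero (m : ℕ) {t : ℤ} (h1 : 0 ≤ t) (h2 : t ≤ 1) : xiM m 1 t = 0 := by
  unfold xiM
  rw [if_neg (by push_cast; omega), if_neg (by push_cast; omega)]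

lemma xiP_cpos (m : ℕ) {t r : ℤ} (ht1 : 1 ≤ t) (ht2 : t ≤ m) (hr1 : 1 ≤ r) (hr2 : r ≤ m)
    (h : ⌈(t:ℚ)/2⌉ = ⌈(r:ℚ)/2⌉) : xiP m 1 t = xiP m 1 r := by
  unfold xiP
  rw [if_pos ⟨by push_cast; omega, ht2⟩, if_pos ⟨by push_cast; omega, hr2⟩]
  have e : ∀ x : ℚ, (x - ((1:ℕ):ℚ) + 1)/2 = x/2 := fun x => by push_cast; ring
  rw [e, e, h]

lemma xiP_cneg (m : ℕ) {t r : ℤ} (ht1 : -(m:ℤ) ≤ t) (ht2 : t ≤ -2)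
    (hr1 : -(m:ℤ) ≤ r) (hr2 : r ≤ -2)
    (h : ⌈(-(t:ℚ) - 1)/2⌉ = ⌈(-(r:ℚ) - 1)/2⌉) : xiP m 1 t = xiP m 1 r := by
  unfold xiP
  rw [if_neg (by push_cast; omega), if_pos ⟨ht1, by push_cast; omega⟩,
    if_neg (by push_cast; omega), if_pos ⟨hr1, by push_cast; omega⟩]
  have e : ∀ x : ℚ, (-x - ((1:ℕ):ℚ))/2 = (-x - 1)/2 := fun x => by push_cast; ring
  rw [e, e, h]

lemma xiM_cpos (m : ℕ) {t r : ℤ} (ht1 : 2 ≤ t) (ht2 : t ≤ m) (hr1 : 2 ≤ r) (hr2 : r ≤ m)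
    (h : ⌈((t:ℚ) - 1)/2⌉ = ⌈((r:ℚ) - 1)/2⌉) : xiM m 1 t = xiM m 1 r := by
  unfold xiM
  rw [if_pos ⟨by push_cast; omega, ht2⟩, if_pos ⟨by push_cast; omega, hr2⟩]
  have e : ∀ x : ℚ, (x - ((1:ℕ):ℚ))/2 = (x - 1)/2 := fun x => by push_cast; ring
  rw [e, e, h]

lemma xiM_cneg (m : ℕ) {t r : ℤ} (ht1 : -(m:ℤ) ≤ t) (ht2 : t ≤ -1)
    (hr1 : -(m:ℤ) ≤ r) (hr2 : r ≤ -1)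
    (h : ⌈(-(t:ℚ))/2⌉ = ⌈(-(r:ℚ))/2⌉) : xiM m 1 t = xiM m 1 r := by
  unfold xiM
  rw [if_neg (by push_cast; omega), if_pos ⟨ht1, by push_cast; omega⟩,
    if_neg (by push_cast; omega), if_pos ⟨hr1, by push_cast; omega⟩]
  have e : ∀ x : ℚ, (-x - ((1:ℕ):ℚ) + 1)/2 = (-x)/2 := fun x => by push_cast; ring
  rw [e, e, h]

/-- the two degree-two classes satisfy monic polynomial relations of
degree `m+1` over `R`, pointwise on `V_m`. -/
theorem statement15 (m : ℕ) (hm : 1 ≤ m) (t : ℤ)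
    (ht1 : -(m : ℤ) ≤ t) (ht2 : t ≤ (m : ℤ)) :
    xiP m 1 t *
      (∏ r ∈ (Finset.Icc 1 m).filter (fun r => Odd r),
        (xiP m 1 t - xiP m 1 (r : ℤ))) *
      (∏ r ∈ (Finset.Icc 1 m).filter (fun r => Even r),
        (xiP m 1 t - xiP m 1 (-(r : ℤ)))) = 0 ∧
    xiM m 1 t *
      (∏ r ∈ (Finset.Icc 1 m).filter (fun r => Odd r),
        (xiM m 1 t - xiM m 1 (-(r : ℤ)))) *
      (∏ r ∈ (Finset.Icc 1 m).filter (fun r => Even r),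
        (xiM m 1 t - xiM m 1 (r : ℤ))) = 0 := by
  constructor
  · -- ξ⁺ part
    rcases lt_or_ge t 1 with hA | hA
    · rcases lt_or_ge t (-1) with hB | hB
      · -- t ≤ -2
        rcases Int.even_or_odd t with ⟨k, hk⟩ | ⟨k, hk⟩
        · -- t even : r = -t, factor in even product vanishes directly
          have hrc : (((-t).toNat : ℕ) : ℤ) = -t := Int.toNat_of_nonneg (by omega)
          have hmem : (-t).toNat ∈ (Finset.Icc 1 m).filter (fun r => Even r) := by
            simp only [mem_filter, mem_Icc]
            refine ⟨⟨by omega, by omega⟩, ?_⟩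
            rw [← Int.even_coe_nat, hrc]
            exact ⟨-k, by omega⟩
          have hz : xiP m 1 t - xiP m 1 (-(((-t).toNat : ℕ) : ℤ)) = 0 := by
            rw [hrc, neg_neg, sub_self]
          rw [Finset.prod_eq_zero hmem hz, mul_zero]
        · -- t odd : t = 2k+1 ≤ -3 ; r = -t-1 even, ξ(t) = ξ(-(r))
          have ht3 : t ≤ -3 := by omega
          have hrc : (((-t-1).toNat : ℕ) : ℤ) = -t-1 := Int.toNat_of_nonneg (by omega)
          have hmem : (-t-1).toNat ∈ (Finset.Icc 1 m).filter (fun r => Even r) := by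
            simp only [mem_filter, mem_Icc]
            refine ⟨⟨by omega, by omega⟩, ?_⟩
            rw [← Int.even_coe_nat, hrc]
            exact ⟨-k-1, by omega⟩
          have hz : xiP m 1 t - xiP m 1 (-(((-t-1).toNat : ℕ) : ℤ)) = 0 := by
            rw [hrc, sub_eq_zero]
            apply xiP_cneg m ht1 (by omega) (by omega) (by omega)
            rw [ceil_q (-t-1) _ (-k-1) (by push_cast; ring) (by omega) (by omega),
              ceil_q (-(-(-t-1))-1) _ (-k-1) (by push_cast; ring) (by omega) (by omega)]
          rw [Finset.prod_eq_zero hmem hz, mul_zero]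
      · -- -1 ≤ t ≤ 0 : ξ⁺(t) = 0
        rw [xiP_zero m (by omega) hB, zero_mul, zero_mul]
    · -- 1 ≤ t ≤ m : factor in odd product vanishes
      rcases Int.even_or_odd t with ⟨k, hk⟩ | ⟨k, hk⟩
      · -- t even, t ≥ 2 ; r = t-1 odd
        have hrc : (((t-1).toNat : ℕ) : ℤ) = t-1 := Int.toNat_of_nonneg (by omega)
        have hmem : (t-1).toNat ∈ (Finset.Icc 1 m).filter (fun r => Odd r) := by
          simp only [mem_filter, mem_Icc]
          refine ⟨⟨by omega, by omega⟩, ?_⟩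
          rw [← Int.odd_coe_nat, hrc]
          exact ⟨k-1, by omega⟩
        have hz : xiP m 1 t - xiP m 1 (((t-1).toNat : ℕ) : ℤ) = 0 := by
          rw [hrc, sub_eq_zero]
          apply xiP_cpos m hA ht2 (by omega) (by omega)
          rw [ceil_q t _ k (by push_cast; ring) (by omega) (by omega),
            ceil_q (t-1) _ k (by push_cast; ring) (by omega) (by omega)]
        rw [Finset.prod_eq_zero hmem hz, mul_zero, zero_mul]
      · -- t odd ; r = t
        have hrc : ((t.toNat : ℕ) : ℤ) = t := Int.toNat_of_nonneg (by omega)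
        have hmem : t.toNat ∈ (Finset.Icc 1 m).filter (fun r => Odd r) := by
          simp only [mem_filter, mem_Icc]
          refine ⟨⟨by omega, by omega⟩, ?_⟩
          rw [← Int.odd_coe_nat, hrc]
          exact ⟨k, by omega⟩
        have hz : xiP m 1 t - xiP m 1 ((t.toNat : ℕ) : ℤ) = 0 := by
          rw [hrc, sub_self]
        rw [Finset.prod_eq_zero hmem hz, mul_zero, zero_mul]
  · -- ξ⁻ part
    rcases lt_or_ge t 2 with hA | hA
    · rcases lt_or_ge t 0 with hB | hB
      · -- t ≤ -1 : factor in odd product vanishes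
        rcases Int.even_or_odd t with ⟨k, hk⟩ | ⟨k, hk⟩
        · -- t even ≤ -2 ; r = -t-1 odd, ξ(t) = ξ(-(r))
          have hrc : (((-t-1).toNat : ℕ) : ℤ) = -t-1 := Int.toNat_of_nonneg (by omega)
          have hmem : (-t-1).toNat ∈ (Finset.Icc 1 m).filter (fun r => Odd r) := by
            simp only [mem_filter, mem_Icc]
            refine ⟨⟨by omega, by omega⟩, ?_⟩
            rw [← Int.odd_coe_nat, hrc]
            exact ⟨-k-1, by omega⟩
          have hz : xiM m 1 t - xiM m 1 (-(((-t-1).toNat : ℕ) : ℤ)) = 0 := by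
            rw [hrc, sub_eq_zero]
            apply xiM_cneg m ht1 (by omega) (by omega) (by omega)
            rw [ceil_q (-t) _ (-k) (by push_cast; ring) (by omega) (by omega),
              ceil_q (-(-(-t-1))) _ (-k) (by push_cast; ring) (by omega) (by omega)]
          rw [Finset.prod_eq_zero hmem hz, mul_zero, zero_mul]
        · -- t odd ≤ -1 ; r = -t odd
          have hrc : (((-t).toNat : ℕ) : ℤ) = -t := Int.toNat_of_nonneg (by omega)
          have hmem : (-t).toNat ∈ (Finset.Icc 1 m).filter (fun r => Odd r) := by
            simp only [mem_filter, mem_Icc]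
            refine ⟨⟨by omega, by omega⟩, ?_⟩
            rw [← Int.odd_coe_nat, hrc]
            exact ⟨-k-1, by omega⟩
          have hz : xiM m 1 t - xiM m 1 (-(((-t).toNat : ℕ) : ℤ)) = 0 := by
            rw [hrc, neg_neg, sub_self]
          rw [Finset.prod_eq_zero hmem hz, mul_zero, zero_mul]
      · -- 0 ≤ t ≤ 1 : ξ⁻(t) = 0
        rw [xiM_zero m hB (by omega), zero_mul, zero_mul]
    · -- 2 ≤ t ≤ m : factor in even product vanishes
      rcases Int.even_or_odd t with ⟨k, hk⟩ | ⟨k, hk⟩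
      · -- t even ; r = t
        have hrc : ((t.toNat : ℕ) : ℤ) = t := Int.toNat_of_nonneg (by omega)
        have hmem : t.toNat ∈ (Finset.Icc 1 m).filter (fun r => Even r) := by
          simp only [mem_filter, mem_Icc]
          refine ⟨⟨by omega, by omega⟩, ?_⟩
          rw [← Int.even_coe_nat, hrc]
          exact ⟨k, by omega⟩
        have hz : xiM m 1 t - xiM m 1 ((t.toNat : ℕ) : ℤ) = 0 := by
          rw [hrc, sub_self]
        rw [Finset.prod_eq_zero hmem hz, mul_zero]
      · -- t odd ≥ 3 ; r = t-1 even
        have hrc : (((t-1).toNat : ℕ) : ℤ) = t-1 := Int.toNat_of_nonneg (by omega)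
        have hmem : (t-1).toNat ∈ (Finset.Icc 1 m).filter (fun r => Even r) := by
          simp only [mem_filter, mem_Icc]
          refine ⟨⟨by omega, by omega⟩, ?_⟩
          rw [← Int.even_coe_nat, hrc]
          exact ⟨k, by omega⟩
        have hz : xiM m 1 t - xiM m 1 (((t-1).toNat : ℕ) : ℤ) = 0 := by
          rw [hrc, sub_eq_zero]
          apply xiM_cpos m hA ht2 (by omega) (by omega)
          rw [ceil_q (t-1) _ k (by push_cast; ring) (by omega) (by omega),
            ceil_q (t-1-1) _ k (by push_cast; ring) (by omega) (by omega)]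
        rw [Finset.prod_eq_zero hmem hz, mul_zero]
end
end

section
/- The family {ξ⁰} ∪ {ξ⁺_q : 1 ≤ q ≤ m} ∪ {ξ⁻_q : 1 ≤ q ≤ m} of functions V_m → R is R-linearly independent: if h₀ ∈ R and h_{q,1}, h_{q,2} ∈ R (1 ≤ q ≤ m) satisfy h₀·ξ⁰(t) + Σ_{q=1}^{m} ( h_{q,1}·ξ⁺_q(t) + h_{q,2}·ξ⁻_q(t) ) = 0 for all t ∈ V_m, then h₀ = 0 and h_{q,1} = h_{q,2} = 0 for all 1 ≤ q ≤ m. -/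
noncomputable section

open Finset MvPolynomial

/-- Evaluation at `α = 1, δ = 0`. -/
def evR : Rpoly →+* ℚ :=
  (MvPolynomial.aeval (fun i : Fin 2 => if i = 0 then (1 : ℚ) else 0)).toRingHom

lemma Pneg_ne_zero (a b : ℤ) : Pneg a b ≠ 0 := by
  intro h
  have h2 : evR (Pneg a b) = (-1 : ℚ) ^ (Finset.Icc a b).card := by
    rw [Pneg, map_prod]
    rw [Finset.prod_congr rfl (fun k _ => ?_), Finset.prod_const]
    simp [evR, va, vd]
  rw [h, map_zero] at h2
  exact pow_ne_zero _ (by norm_num : (-1 : ℚ) ≠ 0) h2.symm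

lemma Ppos_ne_zero (a b : ℤ) : Ppos a b ≠ 0 := by
  intro h
  have h2 : evR (Ppos a b) = (1 : ℚ) ^ (Finset.Icc a b).card := by
    rw [Ppos, map_prod]
    rw [Finset.prod_congr rfl (fun k _ => ?_), Finset.prod_const]
    simp [evR, va, vd]
  rw [h, map_zero] at h2
  simp at h2

lemma ceil_half : ⌈(1 : ℚ) / 2⌉ = 1 := by
  rw [Int.ceil_eq_iff]
  norm_num

lemma xiP_zero_s18 (m : ℤ) (q : ℕ) (t : ℤ) (ha : t < (q : ℤ)) (hb : -((q : ℤ) + 1) < t) :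
    xiP m q t = 0 := by
  rw [xiP, if_neg (by omega), if_neg (by omega)]

lemma xiM_zero_s18 (m : ℤ) (q : ℕ) (t : ℤ) (ha : t < (q : ℤ) + 1) (hb : -(q : ℤ) < t) :
    xiM m q t = 0 := by
  rw [xiM, if_neg (by omega), if_neg (by omega)]

lemma xiP_self (m : ℤ) (q : ℕ) (hq : 1 ≤ q) (hqm : (q : ℤ) ≤ m) :
    xiP m q (q : ℤ) ≠ 0 := by
  rw [xiP, if_pos ⟨le_refl _, hqm⟩]
  have hc : ⌈(((q : ℤ) : ℚ) - (q : ℚ) + 1) / 2⌉ = 1 := by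
    push_cast
    rw [show ((q : ℚ) - (q : ℚ) + 1) / 2 = 1 / 2 by ring, ceil_half]
  rw [hc]
  refine mul_ne_zero ?_ (Pneg_ne_zero _ _)
  have : B (1 + (q : ℤ) - 1) q = 1 := by
    have : (1 + (q : ℤ) - 1) = (q : ℤ) := by ring
    rw [this, B]
    simp
  rw [this]
  simp

lemma xiM_self (m : ℤ) (q : ℕ) (hq : 1 ≤ q) (hqm : (q : ℤ) ≤ m) :
    xiM m q (-(q : ℤ)) ≠ 0 := by
  rw [xiM, if_neg (by omega), if_pos ⟨by omega, le_refl _⟩]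
  have hc : (-(((-(q : ℤ)) : ℤ) : ℚ) - (q : ℚ) + 1) / 2 = 1 / 2 := by
    push_cast; ring
  rw [hc, ceil_half]
  refine mul_ne_zero ?_ (Ppos_ne_zero _ _)
  have : B (1 + (q : ℤ) - 1) q = 1 := by
    have : (1 + (q : ℤ) - 1) = (q : ℤ) := by ring
    rw [this, B]
    simp
  rw [this]
  simp

/-- the Knutson–Tao classes `ξ⁰, ξ⁺_q, ξ⁻_q (1 ≤ q ≤ m)` are
`R`-linearly independent as functions on `V_m`. -/
theorem statement18 (m : ℕ) (hm : 1 ≤ m) (h0 : Rpoly) (h1 h2 : ℕ → Rpoly)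
    (hz : ∀ t : ℤ, -(m : ℤ) ≤ t → t ≤ (m : ℤ) →
      h0 + ∑ q ∈ Finset.Icc 1 m, (h1 q * xiP m q t + h2 q * xiM m q t) = 0) :
    h0 = 0 ∧ ∀ q : ℕ, 1 ≤ q → q ≤ m → h1 q = 0 ∧ h2 q = 0 := by
  have hh0 : h0 = 0 := by
    have h := hz 0 (by omega) (by omega)
    rw [Finset.sum_eq_zero] at h
    · simpa using h
    · intro q hq
      simp only [Finset.mem_Icc] at hq
      rw [xiP_zero_s18 m q 0 (by omega) (by omega), xiM_zero_s18 m q 0 (by omega) (by omega)]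
      ring
  refine ⟨hh0, ?_⟩
  intro t
  induction t using Nat.strong_induction_on with
  | _ t IH =>
    intro ht1 htm
    have hzP := hz (t : ℤ) (by omega) (by exact_mod_cast htm)
    have hzM := hz (-(t : ℤ)) (by simp; exact_mod_cast htm) (by omega)
    rw [hh0, zero_add] at hzP hzM
    -- reduce the sum at vertex t
    have hP : h1 t * xiP m t (t : ℤ) = 0 := by
      rw [Finset.sum_eq_single_of_mem t (Finset.mem_Icc.mpr ⟨ht1, htm⟩)] at hzP
      · rw [xiM_zero_s18 m t (t : ℤ) (by omega) (by omega), mul_zero, add_zero] at hzP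
        exact hzP
      · intro q hq hqt
        simp only [Finset.mem_Icc] at hq
        rcases lt_or_gt_of_ne hqt with h | h
        · have := IH q h hq.1 (le_trans (le_of_lt h) htm)
          rw [this.1, this.2, zero_mul, zero_mul, add_zero]
        · rw [xiP_zero_s18 m q (t : ℤ) (by omega) (by omega),
            xiM_zero_s18 m q (t : ℤ) (by omega) (by omega)]
          ring
    have hM : h2 t * xiM m t (-(t : ℤ)) = 0 := by
      rw [Finset.sum_eq_single_of_mem t (Finset.mem_Icc.mpr ⟨ht1, htm⟩)] at hzM
      · rw [xiP_zero_s18 m t (-(t : ℤ)) (by omega) (by omega), mul_zero, zero_add] at hzM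
        exact hzM
      · intro q hq hqt
        simp only [Finset.mem_Icc] at hq
        rcases lt_or_gt_of_ne hqt with h | h
        · have := IH q h hq.1 (le_trans (le_of_lt h) htm)
          rw [this.1, this.2, zero_mul, zero_mul, add_zero]
        · rw [xiP_zero_s18 m q (-(t : ℤ)) (by omega) (by omega),
            xiM_zero_s18 m q (-(t : ℤ)) (by omega) (by omega)]
          ring
    constructor
    · rcases mul_eq_zero.mp hP with h | h
      · exact h
      · exact absurd h (xiP_self m t ht1 (by exact_mod_cast htm))
    · rcases mul_eq_zero.mp hM with h | h
      · exact h
      · exact absurd h (xiM_self m t ht1 (by exact_mod_cast htm))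
end
end
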